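/- Let L be a Lie superalgebra over a field of characteristic p ≥ 3 with commuting elements: specifically suppose x₁, …, x_m ∈ L₀ pairwise commute in U(L), y ∈ L₁, and [xᵢ, y, y, y] = 0 in U(L) for each i. Then the left-normed commutator [x₁⋯x_m, y, y, …, y] with y repeated p times is zero in U(L). -/

import Mathlib

/-- A Lie superalgebra structure on an `F`-module `L`: an internal direct sum
decomposition `L = L₀ ⊕ L₁` together with a bilinear bracket satisfying the grading,
super-anticommutativity and super-Jacobi identities (the latter two stated for
homogeneous arguments and extended by bilinearity). -/
structure LieSuperStruct (F : Type*) (L : Type*) [Field F] [AddCommGroup L]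
    [Module F L] where
  L0 : Submodule F L
  L1 : Submodule F L
  compl : IsCompl L0 L1
  bracket : L →ₗ[F] L →ₗ[F] L
  grade00 : ∀ x ∈ L0, ∀ y ∈ L0, bracket x y ∈ L0
  grade01 : ∀ x ∈ L0, ∀ y ∈ L1, bracket x y ∈ L1
  grade10 : ∀ x ∈ L1, ∀ y ∈ L0, bracket x y ∈ L1
  grade11 : ∀ x ∈ L1, ∀ y ∈ L1, bracket x y ∈ L0
  anti_even : ∀ x ∈ L0, ∀ y : L, bracket x y = - bracket y x
  anti_odd : ∀ x ∈ L1, ∀ y ∈ L1, bracket x y = bracket y x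
  jacobi_even : ∀ x ∈ L0, ∀ y z : L,
    bracket x (bracket y z) = bracket (bracket x y) z + bracket y (bracket x z)
  jacobi_odd_even : ∀ x ∈ L1, ∀ y ∈ L0, ∀ z : L,
    bracket x (bracket y z) = bracket (bracket x y) z + bracket y (bracket x z)
  jacobi_odd_odd : ∀ x ∈ L1, ∀ y ∈ L1, ∀ z : L,
    bracket x (bracket y z) = bracket (bracket x y) z - bracket y (bracket x z)

namespace LieSuperStruct

variable {F L : Type*} [Field F] [AddCommGroup L] [Module F L]

/-- The span of all brackets `(x, y)` with `x ∈ M`, `y ∈ N`. -/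
def bracketSpan (S : LieSuperStruct F L) (M N : Submodule F L) : Submodule F L :=
  Submodule.span F {w | ∃ x ∈ M, ∃ y ∈ N, w = S.bracket x y}

/-- Lower central series of a subalgebra `N`: `γ₁ = N`, `γ_{n+1} = (γₙ, N)`. -/
def lcsOn (S : LieSuperStruct F L) (N : Submodule F L) : ℕ → Submodule F L
  | 0 => N
  | n + 1 => S.bracketSpan (S.lcsOn N n) N

/-- Lower central series of `L` itself. -/
def lcs (S : LieSuperStruct F L) : ℕ → Submodule F L := S.lcsOn ⊤

/-- A Lie superalgebra is nilpotent if its lower central series vanishes. -/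
def IsNilpotent (S : LieSuperStruct F L) : Prop := ∃ n, S.lcs n = ⊥

/-- `A` is an ideal of `L`. -/
def IsIdeal (S : LieSuperStruct F L) (A : Submodule F L) : Prop :=
  ∀ x ∈ A, ∀ y : L, S.bracket x y ∈ A ∧ S.bracket y x ∈ A

/-- `A` is a homogeneous (graded) submodule. -/
def IsHomogeneous (S : LieSuperStruct F L) (A : Submodule F L) : Prop :=
  A = (A ⊓ S.L0) ⊔ (A ⊓ S.L1)

/-- The adjoint map of `x`. -/
def ad (S : LieSuperStruct F L) (x : L) : Module.End F L := S.bracket x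

end LieSuperStruct

/-- The left-normed `n`-fold iterated Lie commutator `[x, y, y, …, y]` in an
associative ring. -/
def engelIter {U : Type*} [Ring U] (y : U) (n : ℕ) (x : U) : U :=
  (fun a => a * y - y * a)^[n] x

/-- An associative ring is bounded Lie Engel if it satisfies `[x, y, …, y] = 0`
(`y` repeated `n` times) identically for some `n ≥ 1`. -/
def IsBoundedLieEngel (U : Type*) [Ring U] : Prop :=
  ∃ n : ℕ, 0 < n ∧ ∀ x y : U, engelIter y n x = 0

/-- The (two-sided) ideal of an associative `F`-algebra generated by all
commutators, as an `F`-submodule. -/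
def commIdeal (F U : Type*) [Field F] [Ring U] [Algebra F U] : Submodule F U :=
  Submodule.span F {w | ∃ a x y b : U, w = a * (x * y - y * x) * b}

/-- Lower central series of the associative algebra `U` viewed as a Lie algebra
under the commutator. -/
def assocLcs (F U : Type*) [Field F] [Ring U] [Algebra F U] : ℕ → Submodule F U
  | 0 => ⊤
  | n + 1 => Submodule.span F {w | ∃ a ∈ assocLcs F U n, ∃ b : U, w = a * b - b * a}

/-- `U` is Lie nilpotent: the lower central series of `(U, [·,·])` terminates. -/
def IsLieNilpotentAlg (F U : Type*) [Field F] [Ring U] [Algebra F U] : Prop :=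
  ∃ n, assocLcs F U n = ⊥

/-- `U` satisfies a (nontrivial) polynomial identity. -/
def IsPI (F U : Type*) [Field F] [Ring U] [Algebra F U] : Prop :=
  ∃ (n : ℕ) (f : FreeAlgebra F (Fin n)), f ≠ 0 ∧
    ∀ v : Fin n → U, FreeAlgebra.lift F v f = 0

/-- `U` satisfies a non-matrix polynomial identity: a PI which fails in `M₂(F)`. -/
def IsNonMatrixPI (F U : Type*) [Field F] [Ring U] [Algebra F U] : Prop :=
  ∃ (n : ℕ) (f : FreeAlgebra F (Fin n)),
    (∀ v : Fin n → U, FreeAlgebra.lift F v f = 0) ∧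
    ∃ w : Fin n → Matrix (Fin 2) (Fin 2) F, FreeAlgebra.lift F w f ≠ 0

/-- `U` together with `ι : L → U` is (a realization of) the universal enveloping
algebra of the Lie superalgebra `L`: `ι` is an injective linear map satisfying the
super-commutation relations, its image generates `U`, and the pair has the
universal property. -/
structure IsUEA (F : Type*) {L : Type*} [Field F] [AddCommGroup L] [Module F L]
    (S : LieSuperStruct F L) (U : Type*) [Ring U] [Algebra F U]
    (ι : L →ₗ[F] U) : Prop where
  rel_even : ∀ x ∈ S.L0, ∀ y : L, ι x * ι y - ι y * ι x = ι (S.bracket x y)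
  rel_odd : ∀ x ∈ S.L1, ∀ y ∈ S.L1, ι x * ι y + ι y * ι x = ι (S.bracket x y)
  inj : Function.Injective ι
  gen : Algebra.adjoin F (Set.range ι) = ⊤
  univ : ∀ (B : Type) [Ring B] [Algebra F B] (φ : L →ₗ[F] B),
    (∀ x ∈ S.L0, ∀ y : L, φ x * φ y - φ y * φ x = φ (S.bracket x y)) →
    (∀ x ∈ S.L1, ∀ y ∈ S.L1, φ x * φ y + φ y * φ x = φ (S.bracket x y)) →
    ∃! ψ : U →ₐ[F] B, ∀ x : L, ψ (ι x) = φ x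

section Aux
variable {F R : Type*} [Field F] [Ring R] [Algebra F R]

lemma engelIter_eq_pow_apply (b : R) (n : ℕ) (x : R) :
    engelIter b n x =
      ((LinearMap.mulRight F b - LinearMap.mulLeft F b) ^ n) x := by
  induction n with
  | zero => simp [engelIter]
  | succ n ih =>
    rw [engelIter, Function.iterate_succ_apply']
    show (engelIter b n x) * b - b * (engelIter b n x) = _
    rw [ih, pow_succ']
    simp [Module.End.mul_apply, LinearMap.sub_apply]

lemma engelIter_p (p : ℕ) [CharP F p] (hp : p.Prime) (hp3 : 3 ≤ p) (b x : R) :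
    engelIter b p x = x * b ^ p - b ^ p * x := by
  have hpR : (p : R) = 0 := by
    have := CharP.cast_eq_zero F p
    calc (p : R) = algebraMap F R (p : F) := by rw [map_natCast]
    _ = 0 := by rw [this, map_zero]
  set Rb := LinearMap.mulRight F b with hRb
  set Lb := LinearMap.mulLeft F b with hLb
  have hcomm : Commute Rb (-Lb) := by
    refine Commute.neg_right (R := Module.End F R) ?_
    apply LinearMap.ext
    intro z
    simp [Rb, Lb, Module.End.mul_apply, mul_assoc]
  have hsum : (Rb - Lb) ^ p = ∑ m ∈ Finset.range (p + 1),
      Rb ^ m * (-Lb) ^ (p - m) * (p.choose m : Module.End F R) := by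
    rw [sub_eq_add_neg, hcomm.add_pow]
  rw [engelIter_eq_pow_apply (F := F), hsum]
  have happ : ∀ m, (Rb ^ m * (-Lb) ^ (p - m) * (p.choose m : Module.End F R)) x
      = p.choose m • ((-1 : R) ^ (p - m) • (b ^ (p - m) * x * b ^ m)) := by
    intro m
    rw [Module.End.mul_apply, Module.End.mul_apply, Module.End.natCast_apply,
      map_nsmul, map_nsmul]
    congr 1
    rw [neg_pow Lb, Module.End.mul_apply]
    simp only [Rb, Lb, LinearMap.pow_mulLeft, LinearMap.pow_mulRight,
      LinearMap.mulLeft_apply, LinearMap.mulRight_apply]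
    rcases Nat.even_or_odd (p - m) with he | ho
    · rw [he.neg_one_pow, he.neg_one_pow, Module.End.one_apply, one_smul, mul_assoc]
    · rw [ho.neg_one_pow, ho.neg_one_pow, LinearMap.neg_apply, Module.End.one_apply,
        neg_smul, one_smul, neg_mul, mul_assoc]
  rw [LinearMap.sum_apply]
  simp only [happ]
  have hodd : Odd p := hp.odd_of_ne_two (by omega)
  have hsub : ({0, p} : Finset ℕ) ⊆ Finset.range (p + 1) := by
    intro k hk
    simp only [Finset.mem_insert, Finset.mem_singleton] at hk
    rcases hk with rfl | rfl <;> simp [Finset.mem_range]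
  rw [← Finset.sum_subset hsub ?_]
  · rw [Finset.sum_pair (by omega : (0:ℕ) ≠ p)]
    simp only [Nat.sub_zero, Nat.sub_self, pow_zero, Nat.choose_self,
      Nat.choose_zero_right, one_smul, hodd.neg_one_pow, neg_smul, one_smul,
      pow_zero, mul_one, one_mul]
    abel
  · intro k hk hknot
    simp only [Finset.mem_insert, Finset.mem_singleton, not_or] at hknot
    simp only [Finset.mem_range] at hk
    obtain ⟨t, ht⟩ := hp.dvd_choose_self hknot.1 (by omega)
    rw [ht, mul_smul, nsmul_eq_mul, hpR, zero_mul]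

end Aux

/-- if `x₁, …, x_m` pairwise commute and `[xᵢ, y, y, y] = 0`, then the
left-normed `p`-fold commutator `[x₁⋯x_m, y, …, y]` vanishes in characteristic `p ≥ 3`. -/
theorem engel_p_of_triple {F R : Type*} [Field F] [Ring R] [Algebra F R]
    (p : ℕ) [CharP F p] (hp : p.Prime) (hp3 : 3 ≤ p)
    {m : ℕ} (a : Fin m → R) (b : R)
    (hcomm : ∀ i j, a i * a j = a j * a i)
    (hb : ∀ i, engelIter b 3 (a i) = 0) :
    engelIter b p (List.ofFn a).prod = 0 := by
  have key : ∀ x : R, engelIter b p x = x * b ^ p - b ^ p * x :=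
    engelIter_p (F := F) p hp hp3 b
  have hzero : ∀ i, engelIter b p (a i) = 0 := by
    intro i
    have hpe : p = (p - 3) + 3 := by omega
    rw [engelIter, hpe, Function.iterate_add_apply]
    show (fun z : R => z * b - b * z)^[p-3] (engelIter b 3 (a i)) = 0
    rw [hb i]
    exact Function.iterate_fixed (by simp) _
  have hcb : Commute (b ^ p) (List.ofFn a).prod := by
    apply Commute.list_prod_right
    intro x hx
    rw [List.mem_ofFn] at hx
    obtain ⟨i, rfl⟩ := hx
    have := hzero i
    rw [key] at this
    exact (sub_eq_zero.mp this).symm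
  rw [key, hcb.eq, sub_self]
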